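/- Let ν be a Lévy measure on ℝ^d satisfying assumptions (i), (iii), (iv) below with q bounded. Then there exists a constant C > 0 such that ν(B(0,r)^c) ≤ C r^{−α} for all 0 < r ≤ 1 and ν(B(0,r)^c) ≤ C r^{−β} for all r > 1. -/

import Mathlib

open MeasureTheory Metric Set
open scoped ENNReal RealInnerProductSpace

noncomputable section

/-- `ℝ^d` with the Euclidean norm. -/
abbrev Euc (d : ℕ) := EuclideanSpace ℝ (Fin d)

/-- The characteristic function `ξ ↦ ∫ e^{i⟨ξ,y⟩} P(dy)` of a measure `P` on `ℝ^d`. -/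
def charFn {d : ℕ} (P : Measure (Euc d)) (ξ : Euc d) : ℂ :=
  ∫ y, Complex.exp (Complex.I * (⟪ξ, y⟫ : ℝ)) ∂P

/-- The Lévy–Khinchin exponent
`Φ(ξ) = −∫ (e^{i⟨ξ,y⟩} − 1 − i⟨ξ,y⟩ 1_{B(0,1)}(y)) ν(dy) − i⟨ξ,b⟩`. -/
def lkExp {d : ℕ} (ν : Measure (Euc d)) (b : Euc d) (ξ : Euc d) : ℂ :=
  -∫ y, (Complex.exp (Complex.I * (⟪ξ, y⟫ : ℝ)) - 1
      - Complex.I * (⟪ξ, y⟫ : ℝ) * ((ball (0 : Euc d) 1).indicator (fun _ => (1:ℝ)) y : ℂ)) ∂ν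
    - Complex.I * (⟪ξ, b⟫ : ℝ)

/-- `ν` is a Lévy measure: `∫ min(1,|y|²) ν(dy) < ∞`. -/
def IsLevyMeasure {d : ℕ} (ν : Measure (Euc d)) : Prop :=
  ∫⁻ y, ENNReal.ofReal (min 1 (‖y‖ ^ 2)) ∂ν < ⊤

/-- Assumption (i): `ν(A) ≤ ∫_S ∫_0^∞ 1_A(sθ) s^{−1−α} q(s) φ(s) ds μ(dθ)` for all Borel `A`. -/
def RadialDom {d : ℕ} (ν μ : Measure (Euc d)) (α : ℝ) (q φ : ℝ → ℝ) : Prop :=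
  ∀ A : Set (Euc d), MeasurableSet A →
    ν A ≤ ∫⁻ θ, (∫⁻ s in Set.Ioi (0:ℝ),
      A.indicator (fun _ => (1:ℝ≥0∞)) (s • θ) * ENNReal.ofReal (s ^ (-1-α) * q s * φ s)) ∂μ

/-- A function `(0,∞) ∋ s ↦ q(s)` which is positive, bounded and nonincreasing on `[0,∞)`. -/
def BddAnti (q : ℝ → ℝ) : Prop :=
  (∀ s, 0 ≤ s → 0 < q s) ∧ (∃ Cb, ∀ s, 0 ≤ s → q s ≤ Cb) ∧
    (∀ s t, 0 ≤ s → s ≤ t → q t ≤ q s)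

/-- Assumption (vi): `μ` lives on the unit sphere and is a `(γ−1)`-measure there. -/
def GammaMeasure {d : ℕ} (μ : Measure (Euc d)) (γ cμ : ℝ) : Prop :=
  (μ (sphere (0 : Euc d) 1)ᶜ = 0) ∧
  ∀ θ : Euc d, ‖θ‖ = 1 → ∀ ρ > (0:ℝ),
    μ (sphere (0 : Euc d) 1 ∩ ball θ ρ) ≤ ENNReal.ofReal (cμ * ρ ^ (γ - 1))

lemma tail_lintegral {α r : ℝ} (hα : 0 < α) (hr : 0 < r) :
    ∫⁻ s in Set.Ici r, ENNReal.ofReal (s ^ (-1-α)) = ENNReal.ofReal (r ^ (-α) / α) := by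
  rw [← setLIntegral_congr (Ioi_ae_eq_Ici (a := r))]
  rw [← MeasureTheory.ofReal_integral_eq_lintegral_ofReal
    (integrableOn_Ioi_rpow_of_lt (by linarith) hr)
    (by filter_upwards [ae_restrict_mem measurableSet_Ioi] with s hs
        exact Real.rpow_nonneg (le_of_lt (hr.trans hs)) _)]
  rw [integral_Ioi_rpow_of_lt (by linarith) hr]
  congr 1
  rw [show (-1 - α + 1) = -α by ring]
  rw [neg_div_neg_eq]

lemma key_bound {d : ℕ} {α : ℝ} (hα : 0 < α) {q φ : ℝ → ℝ}
    (hq : BddAnti q) (hφ : BddAnti φ)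
    (ν μ : Measure (Euc d)) [IsFiniteMeasure μ]
    (hdom : RadialDom ν μ α q φ) (hμ : μ (sphere (0 : Euc d) 1)ᶜ = 0)
    {r : ℝ} (hr : 0 < r) :
    ν (ball (0 : Euc d) r)ᶜ ≤
      ENNReal.ofReal ((μ Set.univ).toReal * (q r * φ r) * (r ^ (-α) / α)) := by
  have hA : MeasurableSet (ball (0 : Euc d) r)ᶜ := measurableSet_ball.compl
  have hqr : 0 < q r := hq.1 r hr.le
  have hφr : 0 < φ r := hφ.1 r hr.le
  have hx : (0:ℝ) ≤ r ^ (-α) / α := div_nonneg (Real.rpow_nonneg hr.le _) hα.le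
  have inner_bound : ∀ θ : Euc d, ‖θ‖ = 1 →
      (∫⁻ s in Set.Ioi (0:ℝ),
        ((ball (0 : Euc d) r)ᶜ).indicator (fun _ => (1:ℝ≥0∞)) (s • θ) *
          ENNReal.ofReal (s ^ (-1-α) * q s * φ s)) ≤
      ENNReal.ofReal (q r * φ r * (r ^ (-α) / α)) := by
    intro θ hθ
    have h1 : (∫⁻ s in Set.Ioi (0:ℝ),
        ((ball (0 : Euc d) r)ᶜ).indicator (fun _ => (1:ℝ≥0∞)) (s • θ) *
          ENNReal.ofReal (s ^ (-1-α) * q s * φ s))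
        = ∫⁻ s in Set.Ioi (0:ℝ),
            (Set.Ici r).indicator (fun s => ENNReal.ofReal (s ^ (-1-α) * q s * φ s)) s := by
      apply setLIntegral_congr_fun measurableSet_Ioi
      intro s hs
      have hnorm : ‖s • θ‖ = s := by
        rw [norm_smul, hθ, mul_one, Real.norm_eq_abs, abs_of_pos hs]
      by_cases hsr : r ≤ s
      · have hmem : s • θ ∈ (ball (0 : Euc d) r)ᶜ := by
          simp only [mem_compl_iff, mem_ball_zero_iff, hnorm, not_lt]
          exact hsr
        simp [Set.indicator_apply, hsr, hmem]
      · have hmem : s • θ ∉ (ball (0 : Euc d) r)ᶜ := by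
          simp only [mem_compl_iff, mem_ball_zero_iff, hnorm, not_lt, not_le] at hsr ⊢
          exact hsr
        simp [Set.indicator_apply, hsr, hmem]
    have hIci : Set.Ici r ∩ Set.Ioi (0:ℝ) = Set.Ici r :=
      Set.inter_eq_self_of_subset_left (fun x (hx : r ≤ x) => lt_of_lt_of_le hr hx)
    rw [h1, lintegral_indicator measurableSet_Ici, Measure.restrict_restrict measurableSet_Ici,
      hIci]
    calc ∫⁻ s in Set.Ici r, ENNReal.ofReal (s ^ (-1-α) * q s * φ s)
        ≤ ∫⁻ s in Set.Ici r, ENNReal.ofReal (q r * φ r) * ENNReal.ofReal (s ^ (-1-α)) := by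
          apply setLIntegral_mono' measurableSet_Ici
          intro s hs
          rw [← ENNReal.ofReal_mul (by positivity)]
          apply ENNReal.ofReal_le_ofReal
          have hs0 : (0:ℝ) < s := lt_of_lt_of_le hr hs
          have hqs := hq.2.2 r s hr.le hs
          have hφs := hφ.2.2 r s hr.le hs
          have h1 : (0:ℝ) ≤ s ^ (-1-α) := Real.rpow_nonneg hs0.le _
          calc s ^ (-1-α) * q s * φ s = s ^ (-1-α) * (q s * φ s) := by ring
            _ ≤ s ^ (-1-α) * (q r * φ r) :=
                mul_le_mul_of_nonneg_left
                  (mul_le_mul hqs hφs (hφ.1 s hs0.le).le hqr.le) h1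
            _ = q r * φ r * s ^ (-1-α) := by ring
      _ = ENNReal.ofReal (q r * φ r) * ∫⁻ s in Set.Ici r, ENNReal.ofReal (s ^ (-1-α)) :=
          lintegral_const_mul' _ _ ENNReal.ofReal_ne_top
      _ = ENNReal.ofReal (q r * φ r) * ENNReal.ofReal (r ^ (-α) / α) := by
          rw [tail_lintegral hα hr]
      _ = ENNReal.ofReal (q r * φ r * (r ^ (-α) / α)) :=
          (ENNReal.ofReal_mul (by positivity)).symm
  have hae : ∀ᵐ θ ∂μ, θ ∈ sphere (0 : Euc d) 1 := by
    rw [MeasureTheory.ae_iff]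
    exact hμ
  calc ν (ball (0 : Euc d) r)ᶜ
      ≤ ∫⁻ θ, (∫⁻ s in Set.Ioi (0:ℝ),
          ((ball (0 : Euc d) r)ᶜ).indicator (fun _ => (1:ℝ≥0∞)) (s • θ) *
            ENNReal.ofReal (s ^ (-1-α) * q s * φ s)) ∂μ := hdom _ hA
    _ ≤ ∫⁻ _θ, ENNReal.ofReal (q r * φ r * (r ^ (-α) / α)) ∂μ := by
        apply lintegral_mono_ae
        filter_upwards [hae] with θ hθ
        exact inner_bound θ (by rwa [mem_sphere_zero_iff_norm] at hθ)
    _ = ENNReal.ofReal (q r * φ r * (r ^ (-α) / α)) * μ Set.univ := lintegral_const _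
    _ = ENNReal.ofReal (q r * φ r * (r ^ (-α) / α)) * ENNReal.ofReal (μ Set.univ).toReal := by
        rw [ENNReal.ofReal_toReal (measure_ne_top μ _)]
    _ = ENNReal.ofReal ((μ Set.univ).toReal * (q r * φ r) * (r ^ (-α) / α)) := by
        rw [← ENNReal.ofReal_mul (by positivity)]
        congr 1
        ring

lemma qphi_decay {α β c₄ : ℝ} (hα : 0 < α) (hc₄ : 0 ≤ c₄) {q φ : ℝ → ℝ}
    (hq : BddAnti q) (hφ : BddAnti φ)
    (hiv : ∀ r > (1:ℝ), ∫⁻ s in Set.Ioc (0:ℝ) r,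
        ENNReal.ofReal (s ^ (1-α) * q s * (φ s / φ (s/2))) ≤ ENNReal.ofReal (c₄ * r ^ (2-β)))
    {r : ℝ} (hr : 1 < r) :
    q r * φ r ≤ (2 * c₄ * φ 0 / min 1 ((2:ℝ) ^ (α-1))) * r ^ (α - β) := by
  set m : ℝ := min 1 ((2:ℝ) ^ (α-1)) with hm
  have hm0 : 0 < m := lt_min one_pos (Real.rpow_pos_of_pos two_pos _)
  have hr0 : (0:ℝ) < r := lt_trans one_pos hr
  have hφ0 : 0 < φ 0 := hφ.1 0 le_rfl
  have hqr : 0 < q r := hq.1 r hr0.le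
  have hφr : 0 < φ r := hφ.1 r hr0.le
  set L : ℝ := m * r ^ (1-α) * (q r * (φ r / φ 0)) with hL
  have hL0 : 0 ≤ L := by positivity
  have hlow : ∀ s ∈ Set.Ioc (r/2) r,
      ENNReal.ofReal L ≤ ENNReal.ofReal (s ^ (1-α) * q s * (φ s / φ (s/2))) := by
    intro s hs
    obtain ⟨hs1, hs2⟩ := hs
    have hs0 : (0:ℝ) < s := lt_trans (by linarith) hs1
    apply ENNReal.ofReal_le_ofReal
    have h1 : m * r ^ (1-α) ≤ s ^ (1-α) := by
      rcases le_total α 1 with h | h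
      · have hstep : ((r/2):ℝ) ^ (1-α) ≤ s ^ (1-α) :=
          Real.rpow_le_rpow (by positivity) hs1.le (by linarith)
        have he : ((r/2):ℝ) ^ (1-α) = r ^ (1-α) / (2:ℝ) ^ (1-α) :=
          Real.div_rpow hr0.le (by norm_num : (0:ℝ) ≤ 2) _
        have hinv : (2:ℝ) ^ (α-1) = ((2:ℝ) ^ (1-α))⁻¹ := by
          rw [← Real.rpow_neg (by norm_num)]
          norm_num
        have h2 : m * r ^ (1-α) ≤ (r/2) ^ (1-α) := by
          have hle : m ≤ (2:ℝ) ^ (α-1) := min_le_right _ _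
          have h2pos : (0:ℝ) < (2:ℝ) ^ (1-α) := Real.rpow_pos_of_pos two_pos _
          calc m * r ^ (1-α) ≤ (2:ℝ) ^ (α-1) * r ^ (1-α) :=
                mul_le_mul_of_nonneg_right hle (Real.rpow_nonneg hr0.le _)
            _ = r ^ (1-α) / (2:ℝ) ^ (1-α) := by rw [hinv]; field_simp
            _ = (r/2) ^ (1-α) := he.symm
        linarith
      · have hstep : r ^ (1-α) ≤ s ^ (1-α) :=
          Real.rpow_le_rpow_of_nonpos hs0 hs2 (by linarith)
        have h2 : m ≤ 1 := min_le_left _ _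
        nlinarith [Real.rpow_nonneg hr0.le (1-α)]
    have h2 : q r ≤ q s := hq.2.2 s r hs0.le hs2
    have h3 : φ r / φ 0 ≤ φ s / φ (s/2) :=
      div_le_div₀ (hφ.1 s hs0.le).le (hφ.2.2 s r hs0.le hs2) (hφ.1 (s/2) (by positivity))
        (hφ.2.2 0 (s/2) le_rfl (by positivity))
    calc L = (m * r ^ (1-α)) * (q r * (φ r / φ 0)) := by rw [hL]
      _ ≤ s ^ (1-α) * (q s * (φ s / φ (s/2))) := by
          apply mul_le_mul h1 _ (by positivity) (Real.rpow_nonneg hs0.le _)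
          exact mul_le_mul h2 h3 (by positivity) (hq.1 s hs0.le).le
      _ = s ^ (1-α) * q s * (φ s / φ (s/2)) := by ring
  have big : ENNReal.ofReal (L * (r/2)) ≤ ENNReal.ofReal (c₄ * r ^ (2-β)) := by
    calc ENNReal.ofReal (L * (r/2))
        = ENNReal.ofReal L * ENNReal.ofReal (r - r/2) := by
          rw [← ENNReal.ofReal_mul hL0]; congr 1; ring
      _ = ∫⁻ _s in Set.Ioc (r/2) r, ENNReal.ofReal L := by
          rw [setLIntegral_const, Real.volume_Ioc]
      _ ≤ ∫⁻ s in Set.Ioc (r/2) r, ENNReal.ofReal (s ^ (1-α) * q s * (φ s / φ (s/2))) :=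
          setLIntegral_mono' measurableSet_Ioc hlow
      _ ≤ ∫⁻ s in Set.Ioc (0:ℝ) r, ENNReal.ofReal (s ^ (1-α) * q s * (φ s / φ (s/2))) :=
          lintegral_mono_set (Set.Ioc_subset_Ioc_left (by linarith))
      _ ≤ ENNReal.ofReal (c₄ * r ^ (2-β)) := hiv r hr
  have hineq : L * (r/2) ≤ c₄ * r ^ (2-β) := by
    rwa [ENNReal.ofReal_le_ofReal_iff (by positivity)] at big
  have hr2 : r ^ (1-α) * r = r ^ (2-α) := by
    rw [show (2-α) = (1-α) + 1 by ring, Real.rpow_add hr0, Real.rpow_one]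
  have hBpos : (0:ℝ) < m * r ^ (2-α) / (2 * φ 0) := by positivity
  have e1 : L * (r/2) = (q r * φ r) * (m * r ^ (2-α) / (2 * φ 0)) := by
    rw [hL, ← hr2]; field_simp
  have hdiv : c₄ * r ^ (2-β) / (m * r ^ (2-α) / (2 * φ 0))
      = (2 * c₄ * φ 0 / m) * r ^ (α-β) := by
    have hsplit : r ^ (2-β) = r ^ (α-β) * r ^ (2-α) := by
      rw [← Real.rpow_add hr0]; congr 1; ring
    have h1 : r ^ (2-α) ≠ 0 := (Real.rpow_pos_of_pos hr0 _).ne'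
    rw [hsplit]
    rw [div_div_eq_mul_div, div_eq_iff (by positivity : m * r ^ (2-α) ≠ 0)]
    field_simp
  calc q r * φ r ≤ c₄ * r ^ (2-β) / (m * r ^ (2-α) / (2 * φ 0)) := by
        rw [le_div_iff₀ hBpos]
        linarith [e1 ▸ hineq]
    _ = (2 * c₄ * φ 0 / m) * r ^ (α-β) := hdiv


/-- Under the radial domination (i) with bounded nonincreasing `q, φ`,
the submultiplicativity (iii) and the integral condition (iv), there is `C > 0` with
`ν(B(0,r)^c) ≤ C r^{−α}` for `0 < r ≤ 1` and `ν(B(0,r)^c) ≤ C r^{−β}` for `r > 1`. -/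
theorem statement9 {d : ℕ} (α β κ₂ c₄ : ℝ) (hα : 0 < α) (hα2 : α < 2)
    (hαβ : α ≤ β) (hβ2 : β ≤ 2) (hκ₂ : 0 < κ₂) (hc₄ : 0 ≤ c₄)
    (q φ : ℝ → ℝ) (hq : BddAnti q) (hφ : BddAnti φ)
    (hφmul : ∀ a b : ℝ, 0 ≤ a → 0 ≤ b → φ a * φ b ≤ κ₂ * φ (a+b))
    (ν μ : Measure (Euc d)) [IsFiniteMeasure μ] (hlevy : IsLevyMeasure ν)
    (hdom : RadialDom ν μ α q φ) (hμ : μ (sphere (0 : Euc d) 1)ᶜ = 0)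
    (hiv : ∀ r > (1:ℝ), ∫⁻ s in Set.Ioc (0:ℝ) r,
        ENNReal.ofReal (s ^ (1-α) * q s * (φ s / φ (s/2))) ≤ ENNReal.ofReal (c₄ * r ^ (2-β))) :
    ∃ C > (0:ℝ),
      (∀ r : ℝ, 0 < r → r ≤ 1 →
        ν (ball (0 : Euc d) r)ᶜ ≤ ENNReal.ofReal (C * r ^ (-α))) ∧
      (∀ r : ℝ, 1 < r →
        ν (ball (0 : Euc d) r)ᶜ ≤ ENNReal.ofReal (C * r ^ (-β))) := by

  obtain ⟨Cq, hCq⟩ := hq.2.1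
  obtain ⟨Cφ, hCφ⟩ := hφ.2.1
  have hCq0 : 0 < Cq := lt_of_lt_of_le (hq.1 0 le_rfl) (hCq 0 le_rfl)
  have hCφ0 : 0 < Cφ := lt_of_lt_of_le (hφ.1 0 le_rfl) (hCφ 0 le_rfl)
  set M : ℝ := (μ Set.univ).toReal with hM
  have hM0 : 0 ≤ M := ENNReal.toReal_nonneg
  set m : ℝ := min 1 ((2:ℝ) ^ (α-1)) with hmdef
  have hm0 : 0 < m := lt_min one_pos (Real.rpow_pos_of_pos two_pos _)
  have hφ0 : 0 < φ 0 := hφ.1 0 le_rfl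
  set K : ℝ := 2 * c₄ * φ 0 / m with hK
  have hK0 : 0 ≤ K := by positivity
  refine ⟨M * Cq * Cφ / α + M * K / α + 1, by positivity, ?_, ?_⟩
  · intro r hr hr1
    refine (key_bound hα hq hφ ν μ hdom hμ hr).trans (ENNReal.ofReal_le_ofReal ?_)
    have hrx : (0:ℝ) ≤ r ^ (-α) := Real.rpow_nonneg hr.le _
    have h1 : q r * φ r ≤ Cq * Cφ :=
      mul_le_mul (hCq r hr.le) (hCφ r hr.le) (hφ.1 r hr.le).le hCq0.le
    calc M * (q r * φ r) * (r ^ (-α) / α) = (M * (q r * φ r) / α) * r ^ (-α) := by ring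
      _ ≤ (M * Cq * Cφ / α + M * K / α + 1) * r ^ (-α) := by
          apply mul_le_mul_of_nonneg_right _ hrx
          have h2 : M * (q r * φ r) ≤ M * (Cq * Cφ) := mul_le_mul_of_nonneg_left h1 hM0
          have h3 : M * (q r * φ r) / α ≤ M * (Cq * Cφ) / α := by
            exact (div_le_div_iff_of_pos_right hα).mpr h2
          have h4 : (0:ℝ) ≤ M * K / α := by positivity
          have h5 : M * (Cq * Cφ) / α = M * Cq * Cφ / α := by ring
          linarith
  · intro r hr
    have hr0 : (0:ℝ) < r := lt_trans one_pos hr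
    refine (key_bound hα hq hφ ν μ hdom hμ hr0).trans (ENNReal.ofReal_le_ofReal ?_)
    have hrx : (0:ℝ) ≤ r ^ (-α) := Real.rpow_nonneg hr0.le _
    have hrβ : (0:ℝ) ≤ r ^ (-β) := Real.rpow_nonneg hr0.le _
    have h1 : q r * φ r ≤ K * r ^ (α-β) := qphi_decay hα hc₄ hq hφ hiv hr
    have hmerge : r ^ (α-β) * r ^ (-α) = r ^ (-β) := by
      rw [← Real.rpow_add hr0]; congr 1; ring
    calc M * (q r * φ r) * (r ^ (-α) / α)
        = (M / α) * (q r * φ r) * r ^ (-α) := by ring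
      _ ≤ (M / α) * (K * r ^ (α-β)) * r ^ (-α) := by
          apply mul_le_mul_of_nonneg_right _ hrx
          exact mul_le_mul_of_nonneg_left h1 (by positivity)
      _ = (M * K / α) * (r ^ (α-β) * r ^ (-α)) := by ring
      _ = (M * K / α) * r ^ (-β) := by rw [hmerge]
      _ ≤ (M * Cq * Cφ / α + M * K / α + 1) * r ^ (-β) := by
          apply mul_le_mul_of_nonneg_right _ hrβ
          have : 0 ≤ M * Cq * Cφ / α := by positivity
          linarith


end
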